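/- If d = 0, b ≠ 0 and a < c, then the set H = {(x,y,z) ∈ S² : z > a/c} is invariant under V, i.e. V(H) ⊆ H. -/
import Mathlib


open Filter Topology

noncomputable def V (a b c d : ℝ) (p : ℝ × ℝ × ℝ) : ℝ × ℝ × ℝ :=
  (p.1 * (1 - b + d * p.2.1),
   p.2.1 * (1 - a - d * p.1 + c * p.2.2),
   p.2.2 * (1 - c * p.2.1) + a * p.2.1 + b * p.1)

def S2 : Set (ℝ × ℝ × ℝ) :=
  {p | 0 ≤ p.1 ∧ 0 ≤ p.2.1 ∧ 0 ≤ p.2.2 ∧ p.1 + p.2.1 + p.2.2 = 1}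
theorem stmt10 (a b c : ℝ) (ha0 : 0 ≤ a) (ha1 : a ≤ 1) (hb0 : 0 < b) (hb1 : b ≤ 1)
    (hac : a < c) (hc : c ≤ 1 + a) :
    Set.MapsTo (V a b c 0) {p ∈ S2 | a / c < p.2.2} {p ∈ S2 | a / c < p.2.2} := by
  rintro ⟨x, y, z⟩ ⟨⟨hx, hy, hz, hsum⟩, hzc⟩
  dsimp only at hx hy hz hsum hzc
  have hc0 : (0 : ℝ) < c := lt_of_le_of_lt ha0 hac
  have hza : a < c * z := by
    have := (div_lt_iff₀ hc0).mp hzc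
    linarith [this]
  have hy1 : y ≤ 1 - z := by nlinarith
  have hcy : c * y < 1 := by nlinarith
  simp only [V, S2, Set.mem_setOf_eq] at hzc ⊢
  refine ⟨⟨?_, ?_, ?_, ?_⟩, ?_⟩
  · nlinarith
  · nlinarith
  · nlinarith
  · ring_nf; nlinarith [hsum]
  · rw [div_lt_iff₀ hc0]
    nlinarith [mul_pos (sub_pos.mpr hza) (sub_pos.mpr hcy), mul_nonneg (mul_nonneg hb0.le hx) hc0.le]
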